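/- Let u, v : Ω → ℝ be smooth, let α ∈ ℝ with α ≠ 0, and suppose u₁ and v₁ vanish nowhere on Ω. If u₃·v₁ = α·(v₂ − v₃)·u₁ and u₄·v₁ = α·(v₃ − v₄)·u₁ hold identically on Ω, then the functions m := (v₂ − v₃)/v₁ and n := (v₃ − v₄)/v₁ satisfy m₄ + α·m·n₁ = n₃ + α·n·m₁ on Ω. -/

import Mathlib

/-- Partial derivative of `F : ℝ⁴ → ℝ` in the `i`-th coordinate direction. -/
noncomputable def pd (i : Fin 4) (F : (Fin 4 → ℝ) → ℝ) : (Fin 4 → ℝ) → ℝ :=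
  fun x => fderiv ℝ F x (Pi.single i 1)

lemma coe_le_infty (n : ℕ∞) : ((n : WithTop ℕ∞)) ≤ ((⊤ : ℕ∞) : WithTop ℕ∞) :=
  WithTop.coe_le_coe.mpr le_top

lemma one_le_infty : (1 : WithTop ℕ∞) ≤ ((⊤ : ℕ∞) : WithTop ℕ∞) := by
  have h : ((1:ℕ∞) : WithTop ℕ∞) = 1 := by norm_cast
  rw [← h]; exact coe_le_infty 1

lemma two_le_infty : (2 : WithTop ℕ∞) ≤ ((⊤ : ℕ∞) : WithTop ℕ∞) := by
  have h : ((2:ℕ∞) : WithTop ℕ∞) = 2 := by norm_cast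
  rw [← h]; exact coe_le_infty 2

section helpers
variable {F f g h : (Fin 4 → ℝ) → ℝ} {x : Fin 4 → ℝ}

lemma contDiffAt_pd (i : Fin 4) (hF : ContDiffAt ℝ (⊤ : ℕ∞) F x) :
    ContDiffAt ℝ (⊤ : ℕ∞) (pd i F) x := by
  have h1 : ContDiffAt ℝ (⊤ : ℕ∞) (fderiv ℝ F) x := hF.fderiv_right (by norm_num)
  exact ((ContinuousLinearMap.apply ℝ ℝ (Pi.single i 1)).contDiff.contDiffAt).comp x h1

lemma diffAt_pd (i : Fin 4) (hF : ContDiffAt ℝ (⊤ : ℕ∞) F x) :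
    DifferentiableAt ℝ (pd i F) x :=
  (contDiffAt_pd i hF).differentiableAt (by simp)

lemma pd_pd_eq (i j : Fin 4) (hF : ContDiffAt ℝ (⊤ : ℕ∞) F x) :
    pd i (pd j F) x = fderiv ℝ (fderiv ℝ F) x (Pi.single i 1) (Pi.single j 1) := by
  have hd : DifferentiableAt ℝ (fderiv ℝ F) x :=
    (hF.fderiv_right (m := (⊤ : ℕ∞)) (by norm_num)).differentiableAt
      (by simp)
  show fderiv ℝ (fun y => (fderiv ℝ F y) (Pi.single j 1)) x (Pi.single i 1) = _
  rw [fderiv_clm_apply hd (differentiableAt_const _)]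
  simp

lemma pd_symm (i j : Fin 4) (hF : ContDiffAt ℝ (⊤ : ℕ∞) F x) :
    pd i (pd j F) x = pd j (pd i F) x := by
  rw [pd_pd_eq i j hF, pd_pd_eq j i hF]
  exact hF.isSymmSndFDerivAt (by rw [minSmoothness_of_isRCLikeNormedField]; exact two_le_infty) _ _

lemma pd_mul (i : Fin 4) (hf : DifferentiableAt ℝ f x) (hg : DifferentiableAt ℝ g x) :
    pd i (fun y => f y * g y) x = pd i f x * g x + f x * pd i g x := by
  show fderiv ℝ (fun y => f y * g y) x (Pi.single i 1) = _
  rw [fderiv_fun_mul hf hg]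
  simp [pd]; ring

lemma pd_sub (i : Fin 4) (hf : DifferentiableAt ℝ f x) (hg : DifferentiableAt ℝ g x) :
    pd i (fun y => f y - g y) x = pd i f x - pd i g x := by
  show fderiv ℝ (fun y => f y - g y) x (Pi.single i 1) = _
  rw [fderiv_fun_sub hf hg]
  simp [pd]

lemma pd_const_mul (i : Fin 4) (c : ℝ) (hf : DifferentiableAt ℝ f x) :
    pd i (fun y => c * f y) x = c * pd i f x := by
  show fderiv ℝ (fun y => c * f y) x (Pi.single i 1) = _
  rw [fderiv_const_mul hf c]
  simp [pd]

lemma pd_congr (i : Fin 4) {Ω : Set (Fin 4 → ℝ)} (hΩ : IsOpen Ω) (hx : x ∈ Ω)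
    (h : Set.EqOn f g Ω) : pd i f x = pd i g x := by
  unfold pd
  rw [Filter.EventuallyEq.fderiv_eq (Filter.eventuallyEq_of_mem (hΩ.mem_nhds hx) h)]

lemma pd_amul (i : Fin 4) (c : ℝ) (hf : DifferentiableAt ℝ f x)
    (hg : DifferentiableAt ℝ g x) (hh : DifferentiableAt ℝ h x) :
    pd i (fun y => c * (f y - g y) * h y) x
      = c * ((pd i f x - pd i g x) * h x + (f x - g x) * pd i h x) := by
  have h1 : DifferentiableAt ℝ (fun y => c * (f y - g y)) x := ((hf.sub hg).const_mul c)
  have H : pd i (fun y => c * (f y - g y) * h y) x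
      = pd i (fun y => c * (f y - g y)) x * h x + (c * (f x - g x)) * pd i h x :=
    pd_mul i h1 hh
  have H2 : pd i (fun y => c * (f y - g y)) x = c * pd i (fun y => f y - g y) x :=
    pd_const_mul i c (hf.sub hg)
  rw [H, H2, pd_sub i hf hg]; ring

end helpers

/-- Elimination of `u` from the Segre type [111] system `u₃v₁ = α(v₂ − v₃)u₁`,
`u₄v₁ = α(v₃ − v₄)u₁` yields `m₄ + α m n₁ = n₃ + α n m₁` for
`m = (v₂ − v₃)/v₁`, `n = (v₃ − v₄)/v₁`.  Coordinates `x¹,…,x⁴` are indexed by `0,…,3`. -/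
theorem statement9 (Ω : Set (Fin 4 → ℝ)) (hΩ : IsOpen Ω)
    (u v : (Fin 4 → ℝ) → ℝ)
    (hu : ContDiffOn ℝ (⊤ : ℕ∞) u Ω) (hv : ContDiffOn ℝ (⊤ : ℕ∞) v Ω)
    (α : ℝ) (hα : α ≠ 0)
    (hu1 : ∀ x ∈ Ω, pd 0 u x ≠ 0) (hv1 : ∀ x ∈ Ω, pd 0 v x ≠ 0)
    (heq1 : ∀ x ∈ Ω, pd 2 u x * pd 0 v x = α * (pd 1 v x - pd 2 v x) * pd 0 u x)
    (heq2 : ∀ x ∈ Ω, pd 3 u x * pd 0 v x = α * (pd 2 v x - pd 3 v x) * pd 0 u x) :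
    ∀ x ∈ Ω,
      pd 3 (fun y => (pd 1 v y - pd 2 v y) / pd 0 v y) x
        + α * ((pd 1 v x - pd 2 v x) / pd 0 v x)
            * pd 0 (fun y => (pd 2 v y - pd 3 v y) / pd 0 v y) x
      = pd 2 (fun y => (pd 2 v y - pd 3 v y) / pd 0 v y) x
        + α * ((pd 2 v x - pd 3 v x) / pd 0 v x)
            * pd 0 (fun y => (pd 1 v y - pd 2 v y) / pd 0 v y) x := by
  intro x hx
  have hux : ContDiffAt ℝ (⊤ : ℕ∞) u x := hu.contDiffAt (hΩ.mem_nhds hx)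
  have hvx : ContDiffAt ℝ (⊤ : ℕ∞) v x := hv.contDiffAt (hΩ.mem_nhds hx)
  have h0v : pd 0 v x ≠ 0 := hv1 x hx
  have h0u : pd 0 u x ≠ 0 := hu1 x hx
  have dv0 := diffAt_pd 0 hvx
  have dv1 := diffAt_pd 1 hvx
  have dv2 := diffAt_pd 2 hvx
  have dv3 := diffAt_pd 3 hvx
  have du0 := diffAt_pd 0 hux
  have du2 := diffAt_pd 2 hux
  have du3 := diffAt_pd 3 hux
  have hMd : DifferentiableAt ℝ (fun y => (pd 1 v y - pd 2 v y) / pd 0 v y) x := by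
    simp only [div_eq_mul_inv]
    exact (dv1.sub dv2).mul (dv0.inv h0v)
  have hNd : DifferentiableAt ℝ (fun y => (pd 2 v y - pd 3 v y) / pd 0 v y) x := by
    simp only [div_eq_mul_inv]
    exact (dv2.sub dv3).mul (dv0.inv h0v)
  have hMeq : Set.EqOn (fun y => (pd 1 v y - pd 2 v y) / pd 0 v y * pd 0 v y)
      (fun y => pd 1 v y - pd 2 v y) Ω := fun y hy => div_mul_cancel₀ _ (hv1 y hy)
  have hNeq : Set.EqOn (fun y => (pd 2 v y - pd 3 v y) / pd 0 v y * pd 0 v y)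
      (fun y => pd 2 v y - pd 3 v y) Ω := fun y hy => div_mul_cancel₀ _ (hv1 y hy)
  have eqM3 : pd 3 (fun y => (pd 1 v y - pd 2 v y) / pd 0 v y) x * pd 0 v x
      + (pd 1 v x - pd 2 v x) / pd 0 v x * pd 3 (pd 0 v) x
      = pd 3 (pd 1 v) x - pd 3 (pd 2 v) x :=
    (pd_mul 3 hMd dv0).symm.trans ((pd_congr 3 hΩ hx hMeq).trans (pd_sub 3 dv1 dv2))
  have eqM0 : pd 0 (fun y => (pd 1 v y - pd 2 v y) / pd 0 v y) x * pd 0 v x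
      + (pd 1 v x - pd 2 v x) / pd 0 v x * pd 0 (pd 0 v) x
      = pd 0 (pd 1 v) x - pd 0 (pd 2 v) x :=
    (pd_mul 0 hMd dv0).symm.trans ((pd_congr 0 hΩ hx hMeq).trans (pd_sub 0 dv1 dv2))
  have eqN2 : pd 2 (fun y => (pd 2 v y - pd 3 v y) / pd 0 v y) x * pd 0 v x
      + (pd 2 v x - pd 3 v x) / pd 0 v x * pd 2 (pd 0 v) x
      = pd 2 (pd 2 v) x - pd 2 (pd 3 v) x :=
    (pd_mul 2 hNd dv0).symm.trans ((pd_congr 2 hΩ hx hNeq).trans (pd_sub 2 dv2 dv3))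
  have eqN0 : pd 0 (fun y => (pd 2 v y - pd 3 v y) / pd 0 v y) x * pd 0 v x
      + (pd 2 v x - pd 3 v x) / pd 0 v x * pd 0 (pd 0 v) x
      = pd 0 (pd 2 v) x - pd 0 (pd 3 v) x :=
    (pd_mul 0 hNd dv0).symm.trans ((pd_congr 0 hΩ hx hNeq).trans (pd_sub 0 dv2 dv3))
  have hm : (pd 1 v x - pd 2 v x) / pd 0 v x * pd 0 v x = pd 1 v x - pd 2 v x :=
    div_mul_cancel₀ _ h0v
  have hn : (pd 2 v x - pd 3 v x) / pd 0 v x * pd 0 v x = pd 2 v x - pd 3 v x :=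
    div_mul_cancel₀ _ h0v
  have heq1' : Set.EqOn (fun y => pd 2 u y * pd 0 v y)
      (fun y => α * (pd 1 v y - pd 2 v y) * pd 0 u y) Ω := fun y hy => heq1 y hy
  have heq2' : Set.EqOn (fun y => pd 3 u y * pd 0 v y)
      (fun y => α * (pd 2 v y - pd 3 v y) * pd 0 u y) Ω := fun y hy => heq2 y hy
  have eqA : pd 3 (pd 2 u) x * pd 0 v x + pd 2 u x * pd 3 (pd 0 v) x
      = α * ((pd 3 (pd 1 v) x - pd 3 (pd 2 v) x) * pd 0 u x
        + (pd 1 v x - pd 2 v x) * pd 3 (pd 0 u) x) :=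
    (pd_mul 3 du2 dv0).symm.trans ((pd_congr 3 hΩ hx heq1').trans (pd_amul 3 α dv1 dv2 du0))
  have eqB : pd 2 (pd 3 u) x * pd 0 v x + pd 3 u x * pd 2 (pd 0 v) x
      = α * ((pd 2 (pd 2 v) x - pd 2 (pd 3 v) x) * pd 0 u x
        + (pd 2 v x - pd 3 v x) * pd 2 (pd 0 u) x) :=
    (pd_mul 2 du3 dv0).symm.trans ((pd_congr 2 hΩ hx heq2').trans (pd_amul 2 α dv2 dv3 du0))
  have eqC : pd 0 (pd 2 u) x * pd 0 v x + pd 2 u x * pd 0 (pd 0 v) x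
      = α * ((pd 0 (pd 1 v) x - pd 0 (pd 2 v) x) * pd 0 u x
        + (pd 1 v x - pd 2 v x) * pd 0 (pd 0 u) x) :=
    (pd_mul 0 du2 dv0).symm.trans ((pd_congr 0 hΩ hx heq1').trans (pd_amul 0 α dv1 dv2 du0))
  have eqD : pd 0 (pd 3 u) x * pd 0 v x + pd 3 u x * pd 0 (pd 0 v) x
      = α * ((pd 0 (pd 2 v) x - pd 0 (pd 3 v) x) * pd 0 u x
        + (pd 2 v x - pd 3 v x) * pd 0 (pd 0 u) x) :=
    (pd_mul 0 du3 dv0).symm.trans ((pd_congr 0 hΩ hx heq2').trans (pd_amul 0 α dv2 dv3 du0))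
  rw [pd_symm 2 3 hux] at eqB
  rw [pd_symm 0 2 hux] at eqC
  rw [pd_symm 0 3 hux] at eqD
  have eqE := heq1 x hx
  have eqF := heq2 x hx
  set a0 := pd 0 v x with ha0
  set a1 := pd 1 v x with ha1
  set a2 := pd 2 v x with ha2
  set a3 := pd 3 v x with ha3
  set b30 := pd 3 (pd 0 v) x with hb30
  set b31 := pd 3 (pd 1 v) x with hb31
  set b32 := pd 3 (pd 2 v) x with hb32
  set b20 := pd 2 (pd 0 v) x with hb20
  set b22 := pd 2 (pd 2 v) x with hb22
  set b23 := pd 2 (pd 3 v) x with hb23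
  set b00 := pd 0 (pd 0 v) x with hb00
  set b01 := pd 0 (pd 1 v) x with hb01
  set b02 := pd 0 (pd 2 v) x with hb02
  set b03 := pd 0 (pd 3 v) x with hb03
  set c0 := pd 0 u x with hc0
  set c2 := pd 2 u x with hc2
  set c3 := pd 3 u x with hc3
  set M3 := pd 3 (fun y => (pd 1 v y - pd 2 v y) / pd 0 v y) x with hM3
  set M0 := pd 0 (fun y => (pd 1 v y - pd 2 v y) / pd 0 v y) x with hM0
  set N2 := pd 2 (fun y => (pd 2 v y - pd 3 v y) / pd 0 v y) x with hN2
  set N0 := pd 0 (fun y => (pd 2 v y - pd 3 v y) / pd 0 v y) x with hN0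
  set m := (a1 - a2) / a0 with hmdef
  set n := (a2 - a3) / a0 with hndef
  have hK : α * c0 * a0 ^ 3 ≠ 0 :=
    mul_ne_zero (mul_ne_zero hα h0u) (pow_ne_zero _ h0v)
  have hG : α * c0 * a0 ^ 3 * ((M3 + α * m * N0) - (N2 + α * n * M0)) = 0 := by
    linear_combination (α*c0*a0^2) * eqM3 - (α*c0*a0^2) * eqN2
      + (α^2*c0*a0^2*m) * eqN0 - (α^2*c0*a0^2*n) * eqM0
      + ((-b30 + α*(b02-b03))*α*c0*a0) * hm + ((b20 - α*(b01-b02))*α*c0*a0) * hn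
      - a0^2 * eqA + a0^2 * eqB
      + (a0*b30 - α*b00*(a2-a3)) * eqE + (-(a0*b20) + α*b00*(a1-a2)) * eqF
      - ((a1-a2)*α*a0) * eqD + ((a2-a3)*α*a0) * eqC
  have hz : (M3 + α * m * N0) - (N2 + α * n * M0) = 0 :=
    (mul_eq_zero.mp hG).resolve_left hK
  linarith [hz]
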